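/- An allocation A = (A_1, …, A_n) of a finite set M among n agents with valuations v_1, …, v_n : 2^M → ℝ is envy-freeable if and only if A maximizes total welfare over all reassignments of its bundles: for every permutation σ of [n], ∑_{i=1}^n v_i(A_i) ≥ ∑_{i=1}^n v_i(A_{σ(i)}). -/

import Mathlib

section Aux

variable {n : ℕ}

/-- Bellman-style iteration: `bell w k i` is the maximum weight of a walk of
length at most `k` starting at `i`, for the weight function `w`. -/
noncomputable def bell [NeZero n] (w : Fin n → Fin n → ℝ) : ℕ → Fin n → ℝ
  | 0 => fun _ => 0
  | k + 1 => fun i => Finset.univ.sup' Finset.univ_nonempty (fun j => w i j + bell w k j)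

variable [NeZero n] {w : Fin n → Fin n → ℝ}

lemma bell_succ (k : ℕ) (i : Fin n) : bell w (k + 1) i
    = Finset.univ.sup' Finset.univ_nonempty (fun j => w i j + bell w k j) := rfl

lemma bell_step (k : ℕ) (i j : Fin n) : w i j + bell w k j ≤ bell w (k + 1) i :=
  Finset.le_sup' (fun j => w i j + bell w k j) (Finset.mem_univ j)

lemma bell_nonneg (hw : ∀ i, w i i = 0) : ∀ (k : ℕ) (i : Fin n), 0 ≤ bell w k i
  | 0, _ => le_refl 0
  | k + 1, i => by
    have h := bell_step (w := w) k i i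
    rw [hw i, zero_add] at h
    exact le_trans (bell_nonneg hw k i) h

lemma bell_mono (hw : ∀ i, w i i = 0) : ∀ (k : ℕ) (i : Fin n),
    bell w k i ≤ bell w (k + 1) i
  | 0, i => bell_nonneg hw 1 i
  | k + 1, i => by
    rw [bell_succ, bell_succ]
    refine Finset.sup'_le _ _ (fun j _ => ?_)
    calc w i j + bell w k j ≤ w i j + bell w (k + 1) j := by
          have := bell_mono hw k j; linarith
      _ ≤ _ := Finset.le_sup' (fun j => w i j + bell w (k + 1) j) (Finset.mem_univ j)

lemma bell_mono_le (hw : ∀ i, w i i = 0) {k k' : ℕ} (h : k ≤ k') (i : Fin n) :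
    bell w k i ≤ bell w k' i := by
  induction h with
  | refl => exact le_refl _
  | step _ ih => exact le_trans ih (bell_mono hw _ _)

/-- The weight of the walk `c 0, c 1, …, c k`. -/
def walkW (w : Fin n → Fin n → ℝ) (c : ℕ → Fin n) (k : ℕ) : ℝ :=
  ∑ t ∈ Finset.range k, w (c t) (c (t + 1))

lemma walkW_le_bell : ∀ (k : ℕ) (c : ℕ → Fin n), walkW w c k ≤ bell w k (c 0)
  | 0, c => by simp [walkW, bell]
  | k + 1, c => by
    have hsplit : walkW w c (k + 1) = walkW w (fun t => c (t + 1)) k + w (c 0) (c 1) := by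
      simp only [walkW, Finset.sum_range_succ']
    have h1 : walkW w (fun t => c (t + 1)) k ≤ bell w k (c 1) :=
      walkW_le_bell k (fun t => c (t + 1))
    have h2 := bell_step (w := w) k (c 0) (c 1)
    rw [hsplit]
    linarith
  termination_by k => k

lemma bell_exists_walk : ∀ (k : ℕ) (i : Fin n), ∃ c : ℕ → Fin n,
    c 0 = i ∧ walkW w c k = bell w k i
  | 0, i => ⟨fun _ => i, rfl, by simp [walkW, bell]⟩
  | k + 1, i => by
    obtain ⟨j, -, hj⟩ := Finset.exists_mem_eq_sup'
      (Finset.univ_nonempty (α := Fin n)) (fun j => w i j + bell w k j)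
    obtain ⟨c, hc0, hcW⟩ := bell_exists_walk k j
    refine ⟨fun t => if t = 0 then i else c (t - 1), if_pos rfl, ?_⟩
    have hb : bell w (k + 1) i = w i j + bell w k j := by
      simp only [bell]; exact hj
    have hsplit : walkW w (fun t => if t = 0 then i else c (t - 1)) (k + 1)
        = walkW w c k + w i (c 0) := by
      simp only [walkW, Finset.sum_range_succ']
      simp
    rw [hsplit, hc0, hcW, hb]
    ring
  termination_by k => k

end Aux

lemma cycle_sum_nonpos {α : Type*} [Fintype α] [DecidableEq α] {n : ℕ}
    (v : Fin n → Finset α → ℝ) (A : Fin n → Finset α)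
    (hmax : ∀ σ : Equiv.Perm (Fin n), ∑ i, v i (A (σ i)) ≤ ∑ i, v i (A i))
    (l : List (Fin n)) :
    ∑ x ∈ l.toFinset, (v x (A (l.formPerm x)) - v x (A x)) ≤ 0 := by
  classical
  have h := hmax l.formPerm
  have htot : ∑ x : Fin n, (v x (A (l.formPerm x)) - v x (A x)) ≤ 0 := by
    rw [Finset.sum_sub_distrib]
    linarith
  have heq : ∑ x ∈ l.toFinset, (v x (A (l.formPerm x)) - v x (A x))
      = ∑ x : Fin n, (v x (A (l.formPerm x)) - v x (A x)) := by
    refine Finset.sum_subset (Finset.subset_univ _) ?_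
    intro x _ hx
    rw [List.formPerm_apply_of_notMem (by simpa using hx)]
    ring
  rw [heq]
  exact htot

/-- **Characterization of envy-freeable allocations (Halpern–Shah).**
An allocation `A = (A 1, …, A n)` of the items among `n` agents is envy-freeable
(there is a nonnegative payment vector `p` with `v i (A i) + p i ≥ v i (A j) + p j`
for all `i, j`) if and only if `A` maximizes total welfare over all reassignments
of its bundles: `∑ i, v i (A i) ≥ ∑ i, v i (A (σ i))` for every permutation `σ`. -/
theorem envy_freeable_iff_welfare_maximizing
    {α : Type*} [Fintype α] [DecidableEq α] {n : ℕ}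
    (v : Fin n → Finset α → ℝ) (A : Fin n → Finset α)
    (hdisj : ∀ i j : Fin n, i ≠ j → Disjoint (A i) (A j))
    (hcover : ∀ x : α, ∃ i : Fin n, x ∈ A i) :
    (∃ p : Fin n → ℝ, (∀ i, 0 ≤ p i) ∧
        ∀ i j : Fin n, v i (A j) + p j ≤ v i (A i) + p i) ↔
      (∀ σ : Equiv.Perm (Fin n), ∑ i, v i (A (σ i)) ≤ ∑ i, v i (A i)) := by
  classical
  constructor
  · rintro ⟨p, hp0, hEF⟩ σ
    have h : ∑ i, (v i (A (σ i)) + p (σ i)) ≤ ∑ i, (v i (A i) + p i) :=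
      Finset.sum_le_sum (fun i _ => hEF i (σ i))
    rw [Finset.sum_add_distrib, Finset.sum_add_distrib] at h
    have hσ : ∑ i, p (σ i) = ∑ i, p i := Equiv.sum_comp σ p
    linarith
  · intro hmax
    rcases Nat.eq_zero_or_pos n with hn | hn
    · subst hn
      exact ⟨fun _ => 0, fun i => i.elim0, fun i => i.elim0⟩
    haveI : NeZero n := ⟨hn.ne'⟩
    set w : Fin n → Fin n → ℝ := fun i j => v i (A j) - v i (A i) with hw
    have hww : ∀ i, w i i = 0 := fun i => sub_self _
    -- Key: the Bellman values stabilize at step n.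
    have key : ∀ i, bell w (n + 1) i ≤ bell w n i := by
      intro i
      obtain ⟨c, hc0, hcW⟩ := bell_exists_walk (w := w) (n + 1) i
      -- pigeonhole: a repeated vertex among c 0, …, c (n+1)
      have hrep : ∃ d : ℕ, 0 < d ∧ ∃ a, a + d ≤ n + 1 ∧ c a = c (a + d) := by
        obtain ⟨t1, t2, hne, heq⟩ :=
          Fintype.exists_ne_map_eq_of_card_lt (fun t : Fin (n + 2) => c t)
            (by simp only [Fintype.card_fin]; omega)
        have h1 := t1.isLt
        have h2 := t2.isLt
        have hne' : (t1 : ℕ) ≠ (t2 : ℕ) := fun h => hne (Fin.ext h)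
        rcases Nat.lt_or_ge (t1 : ℕ) (t2 : ℕ) with hlt | hge
        · exact ⟨(t2 : ℕ) - t1, by omega, t1, by omega,
            by rw [show (t1 : ℕ) + ((t2 : ℕ) - (t1 : ℕ)) = (t2 : ℕ) by omega]; exact heq⟩
        · exact ⟨(t1 : ℕ) - t2, by omega, t2, by omega,
            by rw [show (t2 : ℕ) + ((t1 : ℕ) - (t2 : ℕ)) = (t1 : ℕ) by omega]; exact heq.symm⟩
      set D := Nat.find hrep with hD
      obtain ⟨hDpos, a, haD, hca⟩ : 0 < D ∧ ∃ a, a + D ≤ n + 1 ∧ c a = c (a + D) :=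
        Nat.find_spec hrep
      -- minimality gives injectivity of c on [a, a + D)
      have hinj : ∀ s < D, ∀ t < D, c (a + s) = c (a + t) → s = t := by
        intro s hs t ht hst
        by_contra hne
        rcases Nat.lt_or_ge s t with hlt | hge
        · exact Nat.find_min hrep (show t - s < D by omega)
            ⟨by omega, a + s, by omega,
              by rw [show a + s + (t - s) = a + t by omega]; exact hst⟩
        · have hlt : t < s := by omega
          exact Nat.find_min hrep (show s - t < D by omega)
            ⟨by omega, a + t, by omega,
              by rw [show a + t + (s - t) = a + s by omega]; exact hst.symm⟩
      -- the cycle c a, c (a+1), …, c (a+D-1)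
      set l : List (Fin n) := (List.range D).map (fun t => c (a + t)) with hl
      have hlen : l.length = D := by simp [hl]
      have hnodup : l.Nodup := by
        refine List.Nodup.map_on ?_ List.nodup_range
        intro s hs t ht hst
        exact hinj s (List.mem_range.mp hs) t (List.mem_range.mp ht) hst
      have hgetl : ∀ (t : ℕ) (h : t < l.length), l[t] = c (a + t) := by
        intro t h
        simp [hl]
      have hform : ∀ t < D, l.formPerm (c (a + t)) = c (a + t + 1) := by
        intro t ht
        have h0 := List.formPerm_apply_getElem l hnodup t (by omega)
        rw [hgetl t (by omega)] at h0
        have hlpos : 0 < l.length := by omega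
        rw [h0, hgetl _ (Nat.mod_lt _ hlpos)]
        rcases Nat.lt_or_ge (t + 1) D with h1 | h1
        · have hmod : (t + 1) % l.length = t + 1 := by
            rw [hlen]; exact Nat.mod_eq_of_lt h1
          rw [hmod, ← Nat.add_assoc]
        · have ht1 : t + 1 = D := Nat.le_antisymm (Nat.succ_le_of_lt ht) h1
          have hmod : (t + 1) % l.length = 0 := by rw [hlen, ht1, Nat.mod_self]
          have harg : a + t + 1 = a + D := by rw [Nat.add_assoc, ht1]
          rw [hmod, Nat.add_zero, harg, ← hca]
      -- the cycle has nonpositive weight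
      have hcyc : ∑ t ∈ Finset.range D, w (c (a + t)) (c (a + t + 1)) ≤ 0 := by
        have h1 := cycle_sum_nonpos v A hmax l
        have h2 : l.toFinset = (Finset.range D).image (fun t => c (a + t)) := by
          ext x
          simp [hl, Finset.mem_image]
        rw [h2, Finset.sum_image (by
          intro s hs t ht hst
          exact hinj s (Finset.mem_range.mp hs) t (Finset.mem_range.mp ht) hst)] at h1
        calc ∑ t ∈ Finset.range D, w (c (a + t)) (c (a + t + 1))
            = ∑ t ∈ Finset.range D,
              (v (c (a + t)) (A (l.formPerm (c (a + t)))) - v (c (a + t)) (A (c (a + t)))) := by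
              refine Finset.sum_congr rfl (fun t ht => ?_)
              rw [hform t (Finset.mem_range.mp ht)]
          _ ≤ 0 := h1
      -- the shortcut walk
      set c' : ℕ → Fin n := fun t => if t < a then c t else c (t + D) with hc'
      have hc'lt : ∀ t, t < a → c' t = c t := by
        intro t ht; simp only [hc']; exact if_pos ht
      have hc'ge : ∀ t, a ≤ t → c' t = c (t + D) := by
        intro t ht; simp only [hc']; exact if_neg (by omega)
      set m := n + 1 - D with hm
      have hc'0 : c' 0 = i := by
        rcases Nat.eq_zero_or_pos a with ha | ha
        · rw [hc'ge 0 (by omega), show 0 + D = a + D by omega, ← hca, ha, hc0]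
        · rw [hc'lt 0 ha, hc0]
      -- weight of shortcut = weight of original − weight of cycle
      have hsplit : walkW w c' m = walkW w c (n + 1)
          - ∑ t ∈ Finset.range D, w (c (a + t)) (c (a + t + 1)) := by
        have ham : a ≤ m := by omega
        have e1 : walkW w c' m
            = ∑ t ∈ Finset.Ico 0 a, w (c' t) (c' (t + 1))
              + ∑ t ∈ Finset.Ico a m, w (c' t) (c' (t + 1)) := by
          rw [walkW, Finset.range_eq_Ico, ← Finset.sum_Ico_consecutive _ (Nat.zero_le a) ham]
        have e2 : ∀ t < a, w (c' t) (c' (t + 1)) = w (c t) (c (t + 1)) := by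
          intro t ht
          have h1 : c' t = c t := hc'lt t ht
          have h2 : c' (t + 1) = c (t + 1) := by
            rcases Nat.lt_or_ge (t + 1) a with h | h
            · exact hc'lt _ h
            · have ha : t + 1 = a := by omega
              rw [hc'ge _ h, ha, ← hca]
          rw [h1, h2]
        have e4 : ∑ t ∈ Finset.Ico a m, w (c' t) (c' (t + 1))
            = ∑ t ∈ Finset.Ico (a + D) (n + 1), w (c t) (c (t + 1)) := by
          rw [Finset.sum_Ico_eq_sum_range, Finset.sum_Ico_eq_sum_range]
          refine Finset.sum_congr (by congr 1; omega) (fun t ht => ?_)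
          rw [hc'ge (a + t) (by omega), hc'ge (a + t + 1) (by omega)]
          rw [show a + t + D = a + D + t by omega]
          rw [show a + t + 1 + D = a + D + t + 1 by omega]
        have e5 : walkW w c (n + 1)
            = ∑ t ∈ Finset.Ico 0 a, w (c t) (c (t + 1))
              + ∑ t ∈ Finset.Ico a (a + D), w (c t) (c (t + 1))
              + ∑ t ∈ Finset.Ico (a + D) (n + 1), w (c t) (c (t + 1)) := by
          rw [walkW, Finset.range_eq_Ico,
            ← Finset.sum_Ico_consecutive _ (Nat.zero_le (a + D)) haD,
            ← Finset.sum_Ico_consecutive _ (Nat.zero_le a) (Nat.le_add_right a D)]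
        have e6 : ∑ t ∈ Finset.Ico a (a + D), w (c t) (c (t + 1))
            = ∑ t ∈ Finset.range D, w (c (a + t)) (c (a + t + 1)) := by
          rw [Finset.sum_Ico_eq_sum_range]
          refine Finset.sum_congr (by congr 1; omega) (fun t ht => ?_)
          rw [show a + t + 1 = a + t + 1 by rfl]
        have e7 : ∑ t ∈ Finset.Ico 0 a, w (c' t) (c' (t + 1))
            = ∑ t ∈ Finset.Ico 0 a, w (c t) (c (t + 1)) :=
          Finset.sum_congr rfl (fun t ht => e2 t (Finset.mem_Ico.mp ht).2)
        rw [e1, e7, e4, e5, e6]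
        ring
      have h1 : walkW w c' m ≤ bell w m i := hc'0 ▸ walkW_le_bell m c'
      have h2 : bell w m i ≤ bell w n i := bell_mono_le hww (by omega) i
      have h3 : bell w (n + 1) i ≤ walkW w c' m := by
        rw [hsplit, ← hcW]; linarith
      linarith
    refine ⟨bell w n, fun i => bell_nonneg hww n i, fun i j => ?_⟩
    have h1 : w i j + bell w n j ≤ bell w (n + 1) i := bell_step n i j
    have h2 := key i
    have h3 : w i j = v i (A j) - v i (A i) := rfl
    linarith
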